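/- Let e : ℝ → ℝ be a twice differentiable continuous function satisfying the closed-loop iPI error equation e'(t) + K_P · e(t) + K_I · ∫₀ᵗ e(s) ds = 0 for every t ≥ 0, where K_P > 0 and K_I > 0. Then e(t) → 0 as t → +∞. -/

import Mathlib

open Filter

/-- Asymptotic stability of the closed-loop iPI error equation
e' + K_P e + K_I ∫₀ᵗ e = 0 for positive gains: the error tends to 0 at +∞. -/
theorem iPI_error_tends_to_zero
    (e : ℝ → ℝ) (K_P K_I : ℝ) (hKP : 0 < K_P) (hKI : 0 < K_I)
    (hcont : Continuous e)
    (hder : Differentiable ℝ e) (hder2 : Differentiable ℝ (deriv e))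
    (heq : ∀ t, 0 ≤ t →
      deriv e t + K_P * e t + K_I * ∫ s in (0:ℝ)..t, e s = 0) :
    Tendsto e atTop (nhds 0) := by
  -- the integral term
  set I : ℝ → ℝ := fun t => ∫ s in (0:ℝ)..t, e s with hIdef
  have hIderiv : ∀ t, HasDerivAt I (e t) t := fun t =>
    intervalIntegral.integral_hasDerivAt_right (hcont.intervalIntegrable 0 t)
      (hcont.stronglyMeasurableAtFilter _ _) hcont.continuousAt
  have hIcont : Continuous I := continuous_iff_continuousAt.2 fun t => (hIderiv t).continuousAt
  -- choice of the small parameter ε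
  obtain ⟨ε, hε0, hε1, hεKI, hεKP, hεD⟩ :
      ∃ ε : ℝ, 0 < ε ∧ ε ≤ 1 ∧ ε ≤ K_I ∧ ε ≤ K_P ∧
        ε * (K_P ^ 2 + 3 * K_I) ≤ 4 * K_I * K_P := by
    have hden : 0 < K_P ^ 2 + 3 * K_I := by positivity
    refine ⟨min (min 1 K_I) (min K_P ((4 * K_I * K_P) / (K_P ^ 2 + 3 * K_I))), ?_, ?_, ?_, ?_, ?_⟩
    · exact lt_min (lt_min one_pos hKI) (lt_min hKP (by positivity))
    · exact (min_le_left _ _).trans (min_le_left _ _)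
    · exact (min_le_left _ _).trans (min_le_right _ _)
    · exact (min_le_right _ _).trans (min_le_left _ _)
    · have h := (min_le_right (min 1 K_I) (min K_P ((4 * K_I * K_P) / (K_P ^ 2 + 3 * K_I)))).trans
        (min_le_right K_P _)
      calc min (min 1 K_I) (min K_P ((4 * K_I * K_P) / (K_P ^ 2 + 3 * K_I))) * (K_P ^ 2 + 3 * K_I)
          ≤ (4 * K_I * K_P) / (K_P ^ 2 + 3 * K_I) * (K_P ^ 2 + 3 * K_I) :=
            mul_le_mul_of_nonneg_right h hden.le
        _ = 4 * K_I * K_P := by field_simp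
  set c : ℝ := ε / 2 with hcdef
  have hc0 : 0 < c := by positivity
  -- Lyapunov function
  set V : ℝ → ℝ := fun t => K_I * I t ^ 2 + ε * I t * e t + e t ^ 2 with hVdef
  have hVcont : Continuous V := by
    rw [hVdef]
    exact ((continuous_const.mul (hIcont.pow 2)).add
      ((continuous_const.mul hIcont).mul hcont)).add (hcont.pow 2)
  have hVderiv : ∀ t, HasDerivAt V
      (K_I * (2 * I t * e t) + ε * (e t * e t + I t * deriv e t) + 2 * e t * deriv e t) t := by
    intro t
    have h1 := hIderiv t
    have h2 := (hder t).hasDerivAt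
    have h3 := ((h1.pow 2).const_mul K_I).add (((h1.const_mul ε).mul h2).add (h2.pow 2))
    convert h3 using 1
    · rfl
    · rfl
    · funext x
      show K_I * I x ^ 2 + ε * I x * e x + e x ^ 2 = _
      simp only [Pi.add_apply, Pi.mul_apply, Pi.pow_apply]
      ring
    · push_cast
      ring
  -- pointwise differential inequality on t ≥ 0
  have hkey : ∀ t, 0 ≤ t →
      K_I * (2 * I t * e t) + ε * (e t * e t + I t * deriv e t) + 2 * e t * deriv e t
        ≤ -c * V t := by
    intro t ht
    have he' : deriv e t = -K_P * e t - K_I * I t := by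
      have := heq t ht
      simp only [hIdef] at *
      linarith
    rw [he', hVdef, hcdef]
    set x := I t
    set y := e t
    -- quadratic form negativity; discriminant condition from hεD
    have hA : 3 * ε / 2 - 2 * K_P < 0 := by nlinarith
    have hdisc : ε * (ε / 2 - K_P) ^ 2 ≤ K_I * (4 * K_P - 3 * ε) := by
      nlinarith [hεD, mul_nonneg (sq_nonneg ε) (sub_nonneg.2 hεKP), pow_pos hε0 3]
    nlinarith [sq_nonneg (2 * (3 * ε / 2 - 2 * K_P) * y + ε * (ε / 2 - K_P) * x),
      mul_nonneg (sub_nonneg.2 hdisc) (sq_nonneg x), sq_nonneg x, sq_nonneg y,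
      mul_pos hε0 hKI, mul_pos hε0 hKP]
  -- W = V * exp(c t) is antitone on [0, ∞)
  set W : ℝ → ℝ := fun t => V t * Real.exp (c * t) with hWdef
  have hexp : ∀ t : ℝ, HasDerivAt (fun s => Real.exp (c * s)) (c * Real.exp (c * t)) t := by
    intro t
    have := ((hasDerivAt_id t).const_mul c).exp
    simpa [mul_comm] using this
  have hWderiv : ∀ t, HasDerivAt W
      ((K_I * (2 * I t * e t) + ε * (e t * e t + I t * deriv e t) + 2 * e t * deriv e t)
        * Real.exp (c * t) + V t * (c * Real.exp (c * t))) t := fun t =>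
    (hVderiv t).mul (hexp t)
  have hWanti : AntitoneOn W (Set.Ici (0 : ℝ)) := by
    apply antitoneOn_of_deriv_nonpos (convex_Ici 0)
    · exact (hVcont.mul (Real.continuous_exp.comp (continuous_const.mul continuous_id))).continuousOn
    · intro t _
      exact ((hWderiv t).differentiableAt).differentiableWithinAt
    · intro t ht
      rw [interior_Ici] at ht
      have ht' : (0:ℝ) ≤ t := le_of_lt ht
      rw [(hWderiv t).deriv]
      have h1 := hkey t ht'
      have h2 : (0:ℝ) < Real.exp (c * t) := Real.exp_pos _
      nlinarith [mul_le_mul_of_nonneg_right h1 h2.le]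
  -- exponential bound on V
  have hVbound : ∀ t, 0 ≤ t → V t ≤ V 0 * Real.exp (-c * t) := by
    intro t ht
    have h := hWanti Set.self_mem_Ici ht ht
    simp only [hWdef, mul_zero, Real.exp_zero, mul_one] at h
    have h2 : (0:ℝ) < Real.exp (c * t) := Real.exp_pos _
    rw [neg_mul, Real.exp_neg, ← div_eq_mul_inv, le_div_iff₀ h2]
    exact h
  -- e t ^ 2 ≤ 2 * V t
  have hsq : ∀ t, e t ^ 2 ≤ 2 * V t := by
    intro t
    simp only [hVdef]
    nlinarith [sq_nonneg (I t + e t), sq_nonneg (I t - e t),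
      mul_nonneg (sub_nonneg.2 hεKI) (sq_nonneg (I t)),
      mul_nonneg (sub_nonneg.2 hε1) (sq_nonneg (e t))]
  -- squeeze: e^2 → 0
  have hsq0 : Tendsto (fun t => e t ^ 2) atTop (nhds 0) := by
    have hub : Tendsto (fun t => 2 * V 0 * Real.exp (-c * t)) atTop (nhds 0) := by
      have h1 : Tendsto (fun t : ℝ => Real.exp (-c * t)) atTop (nhds 0) := by
        apply Real.tendsto_exp_atBot.comp
        exact (tendsto_const_mul_atBot_of_neg (by linarith)).2 tendsto_id
      simpa using h1.const_mul (2 * V 0)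
    apply tendsto_of_tendsto_of_tendsto_of_le_of_le' tendsto_const_nhds hub
    · exact Eventually.of_forall (fun t => sq_nonneg _)
    · filter_upwards [eventually_ge_atTop (0:ℝ)] with t ht
      calc e t ^ 2 ≤ 2 * V t := hsq t
        _ ≤ 2 * (V 0 * Real.exp (-c * t)) := by linarith [hVbound t ht]
        _ = 2 * V 0 * Real.exp (-c * t) := by ring
  -- conclude
  rw [tendsto_zero_iff_norm_tendsto_zero]
  have h := (Real.continuous_sqrt.tendsto 0).comp hsq0
  simp only [Function.comp_def, Real.sqrt_sq_eq_abs, Real.sqrt_zero] at h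
  simpa [Real.norm_eq_abs] using h
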